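/- There exist constants c₁, c₂, C, c > 0 and a family of trees (t_n) over the ranked alphabet {a, b, c} with rank(a) = 0, rank(b) = 1, rank(c) = 2, such that for all sufficiently large n: (i) c₁·n ≤ |t_n| ≤ c₂·n; (ii) every subtree s of t_n has depth at most C·log₂(|s|) + C; and (iii) the minimal dag of t_n has size at least c·n·log₂log₂(n)/log₂(n). -/

import Mathlib

universe u v

/-- Finite rooted ordered labelled trees. -/
inductive RTree (L : Type u) : Type u
  | node : L → List (RTree L) → RTree L

namespace RTree

/-- The number of nodes of a tree. -/
def size {L : Type u} : RTree L → ℕ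
  | .node _ ts => 1 + (ts.attach.map (fun x => x.1.size)).sum
termination_by t => sizeOf t
decreasing_by simp_wf; have := List.sizeOf_lt_of_mem x.2; omega

/-- The list of labels of the nodes of a tree. -/
def labelsList {L : Type u} : RTree L → List L
  | .node f ts => f :: (ts.attach.map (fun x => x.1.labelsList)).flatten
termination_by t => sizeOf t
decreasing_by simp_wf; have := List.sizeOf_lt_of_mem x.2; omega

/-- The depth of a tree: the maximal number of edges on a path from the root
to a leaf. -/
def depth {L : Type u} : RTree L → ℕ
  | .node _ ts => (ts.attach.map (fun x => x.1.depth + 1)).foldr max 0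
termination_by t => sizeOf t
decreasing_by simp_wf; have := List.sizeOf_lt_of_mem x.2; omega

/-- `Subtree s t` holds iff `s` is the subtree of `t` rooted at some node
of `t`. -/
inductive Subtree {L : Type u} : RTree L → RTree L → Prop
  | refl (t : RTree L) : Subtree t t
  | child {s t : RTree L} {f : L} {ts : List (RTree L)} :
      t ∈ ts → Subtree s t → Subtree s (.node f ts)

/-- A tree is well-formed over a ranked alphabet if every node labelled by a
symbol of rank `k` has exactly `k` children. -/
inductive WF {L : Type u} (rk : L → ℕ) : RTree L → Prop
  | node {f : L} {ts : List (RTree L)} :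
      ts.length = rk f → (∀ t ∈ ts, WF rk t) → WF rk (.node f ts)

end RTree

/-- The ranked alphabet `{a, b, c}` with `rank(a) = 0`, `rank(b) = 1`,
`rank(c) = 2`. -/
inductive ABC : Type
  | a | b | c

/-- The rank function of the alphabet `{a, b, c}`. -/
def ABC.rk : ABC → ℕ
  | .a => 0
  | .b => 1
  | .c => 2


namespace RTree

theorem size_node {L : Type u} (f : L) (ts : List (RTree L)) :
    (RTree.node f ts).size = 1 + (ts.map size).sum := by
  rw [RTree.size]
  congr 1
  exact congrArg List.sum (List.attach_map_val (l := ts) (f := size))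

theorem depth_node {L : Type u} (f : L) (ts : List (RTree L)) :
    (RTree.node f ts).depth = (ts.map (fun t => t.depth + 1)).foldr max 0 := by
  rw [RTree.depth]
  congr 1
  exact List.attach_map_val (l := ts) (f := fun t => t.depth + 1)

@[simp] theorem size_node0 {L : Type u} (f : L) : (RTree.node f []).size = 1 := by
  simp [size_node]

@[simp] theorem size_node1 {L : Type u} (f : L) (x : RTree L) :
    (RTree.node f [x]).size = 1 + x.size := by simp [size_node]

@[simp] theorem size_node2 {L : Type u} (f : L) (x y : RTree L) :
    (RTree.node f [x, y]).size = 1 + x.size + y.size := by simp [size_node]; ring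

@[simp] theorem depth_node0 {L : Type u} (f : L) : (RTree.node f []).depth = 0 := by
  simp [depth_node]

@[simp] theorem depth_node1 {L : Type u} (f : L) (x : RTree L) :
    (RTree.node f [x]).depth = x.depth + 1 := by simp [depth_node]

@[simp] theorem depth_node2 {L : Type u} (f : L) (x y : RTree L) :
    (RTree.node f [x, y]).depth = max (x.depth + 1) (y.depth + 1) := by
  simp [depth_node]

theorem size_pos {L : Type u} (t : RTree L) : 1 ≤ t.size := by
  obtain ⟨f, ts⟩ := t; rw [size_node]; omega

theorem Subtree.trans {L : Type u} {a b c : RTree L}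
    (h1 : Subtree a b) (h2 : Subtree b c) : Subtree a c := by
  induction h2 with
  | refl => exact h1
  | child mem _ ih => exact .child mem ih

theorem subtree_finite {L : Type u} (t : RTree L) : {s : RTree L | s.Subtree t}.Finite := by
  obtain ⟨f, ts⟩ := t
  have IH : ∀ x ∈ ts, {s : RTree L | s.Subtree x}.Finite := by
    intro x hx
    have := List.sizeOf_lt_of_mem hx
    exact subtree_finite x
  have hsub : {s : RTree L | s.Subtree (.node f ts)} ⊆
      insert (RTree.node f ts) (⋃ x ∈ ts, {s : RTree L | s.Subtree x}) := by
    rintro s hs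
    cases hs with
    | refl => exact Set.mem_insert _ _
    | child mem hsub =>
        exact Set.mem_insert_of_mem _ (Set.mem_biUnion mem hsub)
  exact Set.Finite.subset (Set.Finite.insert _ ((ts.finite_toSet).biUnion IH)) hsub
termination_by sizeOf t
decreasing_by simp_wf; omega

end RTree

namespace Statement11

open RTree

def bit : Bool → RTree ABC
  | false => .node .c [.node .a [], .node .b [.node .a []]]
  | true  => .node .c [.node .b [.node .a []], .node .a []]

def utree : ℕ → (ℕ → Bool) → RTree ABC
  | 0, f => bit (f 0)
  | k+1, f => .node .c [utree k f, utree k (fun p => f (p + 2^k))]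

def bchain : ℕ → RTree ABC → RTree ABC
  | 0, t => t
  | j+1, t => .node .b [bchain j t]

def ttop : ℕ → (ℕ → RTree ABC) → RTree ABC
  | 0, g => g 0
  | d+1, g => .node .c [ttop d g, ttop d (fun i => g (i + 2^d))]

@[simp] theorem size_bit (v : Bool) : (bit v).size = 4 := by cases v <;> simp [bit]

@[simp] theorem depth_bit (v : Bool) : (bit v).depth = 2 := by cases v <;> simp [bit]

theorem size_utree (k : ℕ) (f : ℕ → Bool) : (utree k f).size + 1 = 5 * 2 ^ k := by
  induction k generalizing f with
  | zero => simp [utree]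
  | succ k ih =>
      have h1 := ih f; have h2 := ih (fun p => f (p + 2^k))
      have h3 : 5 * 2 ^ (k+1) = 5 * 2 ^ k + 5 * 2 ^ k := by ring
      simp [utree]; omega

theorem depth_utree (k : ℕ) (f : ℕ → Bool) : (utree k f).depth = k + 2 := by
  induction k generalizing f with
  | zero => simp [utree]
  | succ k ih => simp [utree, ih]

theorem size_bchain (j : ℕ) (t : RTree ABC) : (bchain j t).size = j + t.size := by
  induction j with
  | zero => simp [bchain]
  | succ j ih => simp [bchain, ih]; omega

theorem depth_bchain (j : ℕ) (t : RTree ABC) : (bchain j t).depth = j + t.depth := by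
  induction j with
  | zero => simp [bchain]
  | succ j ih => simp [bchain, ih]; omega

theorem size_ttop (d : ℕ) (g : ℕ → RTree ABC) (S : ℕ) (hg : ∀ i, (g i).size = S) :
    (ttop d g).size + 1 = 2 ^ d * (S + 1) := by
  induction d generalizing g with
  | zero => simp [ttop, hg]
  | succ d ih =>
      have h1 := ih g hg
      have h2 := ih (fun i => g (i + 2^d)) (fun i => hg _)
      have h3 : 2 ^ (d+1) * (S+1) = 2 ^ d * (S+1) + 2 ^ d * (S+1) := by ring
      simp [ttop]; omega

theorem depth_ttop (d : ℕ) (g : ℕ → RTree ABC) (D : ℕ) (hg : ∀ i, (g i).depth = D) :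
    (ttop d g).depth = d + D := by
  induction d generalizing g with
  | zero => simp [ttop, hg]
  | succ d ih =>
      have h1 := ih g hg
      have h2 := ih (fun i => g (i + 2^d)) (fun i => hg _)
      simp [ttop, h1, h2]; omega

theorem wf_a : (RTree.node ABC.a []).WF ABC.rk := .node rfl (by simp)

theorem wf_ba : (RTree.node ABC.b [RTree.node ABC.a []]).WF ABC.rk :=
  .node rfl (by rintro t ht; simp at ht; subst ht; exact wf_a)

theorem wf_bit (v : Bool) : (bit v).WF ABC.rk := by
  cases v <;>
    exact .node rfl (by
      rintro t ht
      simp at ht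
      rcases ht with h | h <;> subst h <;> first | exact wf_a | exact wf_ba)

theorem wf_utree (k : ℕ) (f : ℕ → Bool) : (utree k f).WF ABC.rk := by
  induction k generalizing f with
  | zero => exact wf_bit _
  | succ k ih =>
      exact .node rfl (by rintro t ht; simp at ht; rcases ht with h | h <;> subst h <;> apply ih)

theorem wf_bchain (j : ℕ) (t : RTree ABC) (h : t.WF ABC.rk) : (bchain j t).WF ABC.rk := by
  induction j with
  | zero => exact h
  | succ j ih => exact .node rfl (by rintro s hs; simp at hs; subst hs; exact ih)

theorem wf_ttop (d : ℕ) (g : ℕ → RTree ABC) (hg : ∀ i, (g i).WF ABC.rk) :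
    (ttop d g).WF ABC.rk := by
  induction d generalizing g with
  | zero => exact hg 0
  | succ d ih =>
      exact .node rfl (by
        rintro t ht; simp at ht
        rcases ht with h | h <;> subst h
        · exact ih g hg
        · exact ih _ (fun i => hg _))

end Statement11

namespace Statement11
open RTree

/-- The local-balance invariant. -/
def Good (t : RTree ABC) : Prop := ∀ s : RTree ABC, s.Subtree t → 2 ^ s.depth ≤ 4 * s.size ^ 2

theorem good_node {f : ABC} {ts : List (RTree ABC)} (h1 : ∀ x ∈ ts, Good x)
    (h2 : 2 ^ (RTree.node f ts).depth ≤ 4 * (RTree.node f ts).size ^ 2) :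
    Good (.node f ts) := by
  intro s hs
  cases hs with
  | refl => exact h2
  | child mem hsub => exact h1 _ mem _ hsub

theorem good_a : Good (RTree.node ABC.a []) := by
  apply good_node (by simp)
  simp

theorem good_ba : Good (RTree.node ABC.b [RTree.node ABC.a []]) := by
  apply good_node (by simpa using good_a)
  simp

theorem good_bit (v : Bool) : Good (bit v) := by
  cases v <;>
    refine good_node (by rintro x hx; simp at hx; rcases hx with h | h <;> subst h <;>
      first | exact good_a | exact good_ba) (by simp)

theorem good_utree (k : ℕ) (f : ℕ → Bool) : Good (utree k f) := by
  induction k generalizing f with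
  | zero => exact good_bit _
  | succ k ih =>
      apply good_node (by rintro x hx; simp at hx; rcases hx with h | h <;> subst h <;> apply ih)
      have hd : (utree (k+1) f).depth = k + 3 := by rw [depth_utree]
      have hs := size_utree (k+1) f
      show 2 ^ (utree (k+1) f).depth ≤ 4 * (utree (k+1) f).size ^ 2
      rw [hd]
      have h1 : 2 ^ (k + 3) ≤ (utree (k+1) f).size := by
        have : (2:ℕ) ^ (k+3) = 8 * 2 ^ k := by ring
        have h5 : 5 * 2 ^ (k+1) = 10 * 2 ^ k := by ring
        have hp : 1 ≤ 2 ^ k := Nat.one_le_two_pow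
        omega
      have h2 : 1 ≤ (utree (k+1) f).size := size_pos _
      nlinarith

/-- chains of length `j ≤ k + 2` over `utree k f` are good -/
theorem good_bchain_utree (k : ℕ) (f : ℕ → Bool) (j : ℕ) (hj : j ≤ k + 2) :
    Good (bchain j (utree k f)) := by
  induction j with
  | zero => exact good_utree k f
  | succ j ih =>
      have ih' := ih (by omega)
      show Good (.node .b [bchain j (utree k f)])
      apply good_node (by rintro x hx; simp at hx; subst hx; exact ih')
      have hd : (RTree.node ABC.b [bchain j (utree k f)]).depth = (j + 1) + (k + 2) := by
        simp [depth_bchain, depth_utree]; omega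
      have hsz : (RTree.node ABC.b [bchain j (utree k f)]).size = 1 + j + (utree k f).size := by
        simp [size_bchain]; omega
      rw [hd, hsz]
      have hu := size_utree k f
      have hp : 2 ^ (j+1) ≤ 2 * 2 ^ (k + 2) := by
        have : 2 ^ (j+1) ≤ 2 ^ (k + 3) := Nat.pow_le_pow_right (by norm_num) (by omega)
        have : (2:ℕ) ^ (k+3) = 2 * 2 ^ (k+2) := by ring
        omega
      have hsz2 : 2 ^ (k + 2) ≤ 1 + j + (utree k f).size := by
        have : (2:ℕ) ^ (k+2) = 4 * 2 ^ k := by ring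
        omega
      calc 2 ^ (j + 1 + (k + 2)) = 2 ^ (j+1) * 2 ^ (k+2) := by rw [pow_add]
        _ ≤ (2 * 2 ^ (k+2)) * 2 ^ (k+2) := Nat.mul_le_mul_right _ hp
        _ = 2 * (2 ^ (k+2) * 2 ^ (k+2)) := by ring
        _ ≤ 4 * ((1 + j + (utree k f).size) * (1 + j + (utree k f).size)) := by
            have := Nat.mul_le_mul hsz2 hsz2
            omega
        _ = 4 * (1 + j + (utree k f).size) ^ 2 := by ring

theorem good_ttop (d : ℕ) (g : ℕ → RTree ABC) (S D : ℕ)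
    (hS : ∀ i, (g i).size = S) (hD : ∀ i, (g i).depth = D)
    (hgood : ∀ i, Good (g i)) (hSD : 2 ^ D ≤ (S + 1) ^ 2) :
    Good (ttop d g) := by
  induction d generalizing g with
  | zero => exact hgood 0
  | succ d ih =>
      show Good (.node .c [ttop d g, ttop d fun i => g (i + 2^d)])
      apply good_node
      · rintro x hx; simp at hx
        rcases hx with h | h <;> subst h
        · exact ih g hS hD hgood
        · exact ih _ (fun i => hS _) (fun i => hD _) (fun i => hgood _)
      · have hd : (ttop (d+1) g).depth = (d+1) + D := depth_ttop _ g D hD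
        have hs : (ttop (d+1) g).size + 1 = 2 ^ (d+1) * (S+1) := size_ttop _ g S hS
        show 2 ^ (ttop (d+1) g).depth ≤ 4 * (ttop (d+1) g).size ^ 2
        rw [hd]
        have h1 : 2 ^ ((d+1) + D) ≤ 2 ^ (d+1) * (S+1) ^ 2 := by
          rw [pow_add]
          exact Nat.mul_le_mul_left _ hSD
        have h2 : 2 ^ (d+1) * (S+1) ^ 2 ≤ (2 ^ (d+1) * (S+1)) ^ 2 := by
          have h3 : 1 ≤ 2 ^ (d+1) := Nat.one_le_two_pow
          calc 2 ^ (d+1) * (S+1) ^ 2 ≤ (2 ^ (d+1) * 2 ^ (d+1)) * (S+1) ^ 2 :=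
                Nat.mul_le_mul_right _ (Nat.le_mul_of_pos_left _ (by omega))
            _ = (2 ^ (d+1) * (S+1)) ^ 2 := by ring
        have h4 : 1 ≤ (ttop (d+1) g).size := size_pos _
        nlinarith [hs, h1, h2]

end Statement11

namespace Statement11
open RTree

theorem subtree_bchain (t : RTree ABC) {j m : ℕ} (h : j ≤ m) :
    (bchain j t).Subtree (bchain m t) := by
  induction m with
  | zero => have : j = 0 := by omega
            subst this; exact .refl _
  | succ m ih =>
      rcases Nat.eq_or_lt_of_le h with h' | h'
      · subst h'; exact .refl _
      · exact .child (List.mem_singleton.mpr rfl) (ih (by omega))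

theorem subtree_ttop (d : ℕ) (g : ℕ → RTree ABC) {i : ℕ} (h : i < 2 ^ d) :
    (g i).Subtree (ttop d g) := by
  induction d generalizing g i with
  | zero => interval_cases i; exact .refl _
  | succ d ih =>
      by_cases hlt : i < 2 ^ d
      · exact .child (by simp [ttop]) (ih g hlt)
      · have h2 : i - 2 ^ d < 2 ^ d := by
          have : 2 ^ (d+1) = 2 ^ d + 2 ^ d := by ring
          omega
        have h3 : g i = (fun p => g (p + 2 ^ d)) (i - 2 ^ d) := by
          simp only []; congr 1; omega
        rw [h3]
        exact .child (f := ABC.c) (ts := [ttop d g, ttop d (fun p => g (p + 2 ^ d))])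
          (by simp) (ih (fun p => g (p + 2 ^ d)) h2)

theorem utree_root (k : ℕ) (f : ℕ → Bool) : ∃ l, utree k f = .node ABC.c l := by
  cases k with
  | zero => cases hf : f 0 <;> simp [utree, hf, bit]
  | succ k => exact ⟨_, rfl⟩

theorem utree_inj : ∀ (k : ℕ) (f f' : ℕ → Bool), utree k f = utree k f' →
    ∀ p < 2 ^ k, f p = f' p := by
  intro k
  induction k with
  | zero =>
      intro f f' h p hp
      interval_cases p
      revert h
      cases hf : f 0 <;> cases hf' : f' 0 <;> simp [utree, hf, hf', bit]
  | succ k ih =>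
      intro f f' h p hp
      rw [utree, utree] at h
      simp only [node.injEq, List.cons.injEq, and_true, true_and] at h
      obtain ⟨h1, h2⟩ := h
      by_cases hlt : p < 2 ^ k
      · exact ih f f' h1 p hlt
      · have h3 : p - 2 ^ k < 2 ^ k := by
          have : 2 ^ (k+1) = 2 ^ k + 2 ^ k := by ring
          omega
        have := ih _ _ h2 (p - 2 ^ k) h3
        simpa [Nat.sub_add_cancel (by omega : 2 ^ k ≤ p)] using this

theorem bchain_inj : ∀ (j j' k k' : ℕ) (f f' : ℕ → Bool),
    bchain j (utree k f) = bchain j' (utree k' f') → j = j' ∧ utree k f = utree k' f' := by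
  intro j
  induction j with
  | zero =>
      intro j' k k' f f' h
      cases j' with
      | zero => exact ⟨rfl, h⟩
      | succ j' =>
          obtain ⟨l, hl⟩ := utree_root k f
          rw [bchain, bchain, hl] at h
          exact absurd h (by simp)
  | succ j ih =>
      intro j' k k' f f' h
      cases j' with
      | zero =>
          obtain ⟨l, hl⟩ := utree_root k' f'
          rw [bchain, bchain, hl] at h
          exact absurd h (by simp)
      | succ j' =>
          rw [bchain, bchain] at h
          simp only [node.injEq, List.cons.injEq, and_true, true_and] at h
          obtain ⟨h1, h2⟩ := ih j' k k' f f' h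
          exact ⟨by omega, h2⟩

/-! ### The family -/

def kk (h : ℕ) : ℕ := Nat.log 2 h + 1

def gad (h : ℕ) (i : ℕ) : RTree ABC := bchain (kk h) (utree (kk h) (fun p => i.testBit p))

def bigT (h : ℕ) : RTree ABC := ttop h (gad h)

theorem size_gad (h i : ℕ) : (gad h i).size = kk h + 5 * 2 ^ (kk h) - 1 := by
  have h1 := size_bchain (kk h) (utree (kk h) (fun p => i.testBit p))
  have h2 := size_utree (kk h) (fun p => i.testBit p)
  rw [gad]; omega

theorem depth_gad (h i : ℕ) : (gad h i).depth = 2 * kk h + 2 := by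
  rw [gad, depth_bchain, depth_utree]; omega

theorem size_bigT (h : ℕ) : (bigT h).size + 1 = 2 ^ h * (kk h + 5 * 2 ^ (kk h)) := by
  have := size_ttop h (gad h) (kk h + 5 * 2 ^ (kk h) - 1) (size_gad h)
  have hp : 1 ≤ 2 ^ (kk h) := Nat.one_le_two_pow
  rw [bigT, this]
  congr 1
  omega

theorem wf_bigT (h : ℕ) : (bigT h).WF ABC.rk :=
  wf_ttop _ _ fun i => wf_bchain _ _ (wf_utree _ _)

theorem good_bigT (h : ℕ) : Good (bigT h) := by
  apply good_ttop h (gad h) (kk h + 5 * 2 ^ (kk h) - 1) (2 * kk h + 2)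
    (size_gad h) (depth_gad h)
    (fun i => good_bchain_utree (kk h) _ (kk h) (by omega))
  have hp : 1 ≤ 2 ^ (kk h) := Nat.one_le_two_pow
  have h1 : kk h + 5 * 2 ^ kk h - 1 + 1 = kk h + 5 * 2 ^ kk h := by omega
  rw [h1]
  calc 2 ^ (2 * kk h + 2) = 4 * (2 ^ kk h * 2 ^ kk h) := by rw [pow_add, two_mul, pow_add]; ring
    _ ≤ (5 * 2 ^ kk h) * (5 * 2 ^ kk h) := by nlinarith
    _ ≤ (kk h + 5 * 2 ^ kk h) * (kk h + 5 * 2 ^ kk h) := by nlinarith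
    _ = (kk h + 5 * 2 ^ kk h) ^ 2 := by ring

theorem card_lower (h : ℕ) :
    2 ^ h * (kk h + 1) ≤ {s : RTree ABC | s.Subtree (bigT h)}.ncard := by
  classical
  set S := {s : RTree ABC | s.Subtree (bigT h)} with hS
  have hfin : S.Finite := subtree_finite _
  set φ : ℕ × ℕ → RTree ABC := fun p => bchain p.2 (utree (kk h) (fun q => p.1.testBit q)) with hφ
  set F : Finset (RTree ABC) :=
    ((Finset.range (2 ^ h)) ×ˢ (Finset.range (kk h + 1))).image φ with hF
  have hinj : Set.InjOn φ ((Finset.range (2 ^ h)) ×ˢ (Finset.range (kk h + 1)) : Finset (ℕ × ℕ)) := by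
    rintro ⟨i, j⟩ hij ⟨i', j'⟩ hij' heq
    simp only [Finset.coe_product, Finset.mem_coe, Set.mem_prod, Finset.mem_range] at hij hij'
    obtain ⟨hjj, hueq⟩ := bchain_inj j j' (kk h) (kk h) _ _ heq
    have hbits := utree_inj (kk h) _ _ hueq
    have hib : i = i' := by
      apply Nat.eq_of_testBit_eq
      intro q
      by_cases hq : q < 2 ^ kk h
      · exact hbits q hq
      · have hh : h ≤ 2 ^ kk h := le_of_lt (Nat.lt_pow_succ_log_self (by norm_num) h)
        have hi : i < 2 ^ q := lt_of_lt_of_le hij.1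
          (Nat.pow_le_pow_right (by norm_num) (by omega))
        have hi' : i' < 2 ^ q := lt_of_lt_of_le hij'.1
          (Nat.pow_le_pow_right (by norm_num) (by omega))
        rw [Nat.testBit_lt_two_pow hi, Nat.testBit_lt_two_pow hi']
    simp [Prod.ext_iff, hib, hjj]
  have hsub : ↑F ⊆ S := by
    intro s hs
    simp only [hF, Finset.coe_image, Set.mem_image, Finset.mem_coe, Finset.mem_product,
      Finset.mem_range] at hs
    obtain ⟨⟨i, j⟩, ⟨hi, hj⟩, rfl⟩ := hs
    have h1 : (φ (i, j)).Subtree (gad h i) := subtree_bchain _ (by omega)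
    have h2 : (gad h i).Subtree (bigT h) := subtree_ttop h (gad h) hi
    exact h1.trans h2
  have hcard : F.card = 2 ^ h * (kk h + 1) := by
    rw [hF, Finset.card_image_of_injOn hinj, Finset.card_product, Finset.card_range,
      Finset.card_range]
  calc 2 ^ h * (kk h + 1) = F.card := hcard.symm
    _ = (↑F : Set (RTree ABC)).ncard := (Set.ncard_coe_finset F).symm
    _ ≤ S.ncard := Set.ncard_le_ncard hsub hfin

end Statement11

namespace Statement11
open RTree

def hfun (n : ℕ) : ℕ := Nat.log 2 n - (Nat.log 2 (Nat.log 2 n) + 3)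

theorem two_mul_add_le : ∀ m : ℕ, 4 ≤ m → 2 * m + 6 ≤ 2 ^ m := by
  intro m hm
  induction m with
  | zero => omega
  | succ m ih =>
      rcases Nat.lt_or_ge m 4 with h | h
      · have hm3 : m = 3 := by omega
        subst hm3; norm_num
      · have h1 := ih h
        have h2 : (2:ℕ) ^ (m+1) = 2 ^ m + 2 ^ m := by ring
        omega

theorem main_aux (n : ℕ) (hn : 2 ^ 100 ≤ n) :
    (n ≤ 13 * (bigT (hfun n)).size) ∧ ((bigT (hfun n)).size ≤ 3 * n) ∧
    (n ≤ 16 * Nat.log 2 n * 2 ^ (hfun n)) ∧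
    (2 ^ (hfun n) * (Nat.log 2 (Nat.log 2 n) + 1) ≤ 2 ^ (hfun n) * (kk (hfun n) + 1)) ∧
    (100 ≤ Nat.log 2 n) ∧ (Nat.log 2 n + 1 ≤ 2 ^ (Nat.log 2 (Nat.log 2 n) + 1)) := by
  set L := Nat.log 2 n with hLdef
  set ℓ := Nat.log 2 L with hℓdef
  set h := hfun n with hhdef
  set k := kk h with hkdef
  have hn0 : n ≠ 0 := by positivity
  have hL : 100 ≤ L := Nat.le_log_of_pow_le (by norm_num) hn
  have hLn : 2 ^ L ≤ n := Nat.pow_log_le_self 2 hn0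
  have hnL : n < 2 ^ (L + 1) := Nat.lt_pow_succ_log_self (by norm_num) n
  have hℓL : 2 ^ ℓ ≤ L := Nat.pow_log_le_self 2 (by omega)
  have hLℓ : L < 2 ^ (ℓ + 1) := Nat.lt_pow_succ_log_self (by norm_num) L
  have hℓ6 : 6 ≤ ℓ := Nat.le_log_of_pow_le (by norm_num)
    (by calc (2:ℕ)^6 ≤ 100 := by norm_num
          _ ≤ L := hL)
  have hcL : 2 * ℓ + 6 ≤ L := le_trans (two_mul_add_le ℓ (by omega)) hℓL
  -- facts about h
  have hhL : h + (ℓ + 3) = L := by rw [hhdef, hfun, ← hLdef, ← hℓdef]; omega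
  have hh2 : L ≤ 2 * h := by omega
  have hh1 : 1 ≤ h := by omega
  -- facts about k
  have hk1 : 2 ^ k ≤ 2 * h := by
    have : 2 ^ Nat.log 2 h ≤ h := Nat.pow_log_le_self 2 (by omega)
    rw [hkdef, kk, pow_succ]; omega
  have hk2 : h < 2 ^ k := Nat.lt_pow_succ_log_self (by norm_num) h
  have hkh : k ≤ h := by
    have := Nat.log_lt_self 2 (show h ≠ 0 by omega)
    rw [hkdef, kk]; omega
  have hkℓ : ℓ ≤ k := by
    have h1 : 2 ^ (ℓ - 1) ≤ h := by
      have h2 : 2 ^ ℓ ≤ 2 * h := le_trans hℓL hh2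
      have h3 : (2:ℕ) ^ ℓ = 2 * 2 ^ (ℓ - 1) := by
        rw [← pow_succ']; congr 1; omega
      omega
    have := Nat.le_log_of_pow_le (show 1 < 2 by norm_num) h1
    rw [hkdef, kk]; omega
  -- size bounds
  have hsize : (bigT h).size + 1 = 2 ^ h * (k + 5 * 2 ^ k) := size_bigT h
  have hub : (bigT h).size + 1 ≤ 11 * h * 2 ^ h := by
    have : k + 5 * 2 ^ k ≤ 11 * h := by omega
    calc (bigT h).size + 1 = 2 ^ h * (k + 5 * 2 ^ k) := hsize
      _ ≤ 2 ^ h * (11 * h) := Nat.mul_le_mul_left _ this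
      _ = 11 * h * 2 ^ h := by ring
  have hlb : 5 * h * 2 ^ h ≤ (bigT h).size + 1 := by
    have h5 : 5 * h ≤ k + 5 * 2 ^ k := by omega
    calc 5 * h * 2 ^ h = 2 ^ h * (5 * h) := by ring
      _ ≤ 2 ^ h * (k + 5 * 2 ^ k) := Nat.mul_le_mul_left _ h5
      _ = (bigT h).size + 1 := hsize.symm
  -- bridge: 2^L vs L * 2^h
  have hbr1 : 2 ^ L ≤ 8 * L * 2 ^ h := by
    have e : (2:ℕ) ^ L = 2 ^ h * 2 ^ (ℓ + 3) := by rw [← pow_add, hhL]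
    have e2 : (2:ℕ) ^ (ℓ + 3) = 8 * 2 ^ ℓ := by ring
    calc (2:ℕ) ^ L = 2 ^ h * (8 * 2 ^ ℓ) := by rw [e, e2]
      _ ≤ 2 ^ h * (8 * L) := Nat.mul_le_mul_left _ (by omega)
      _ = 8 * L * 2 ^ h := by ring
  have hbr2 : 4 * L * 2 ^ h ≤ 2 ^ L := by
    have e : (2:ℕ) ^ L = 2 ^ h * 2 ^ (ℓ + 3) := by rw [← pow_add, hhL]
    have e2 : (2:ℕ) ^ (ℓ + 3) = 4 * 2 ^ (ℓ + 1) := by ring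
    calc 4 * L * 2 ^ h ≤ 4 * 2 ^ (ℓ+1) * 2 ^ h := by
          have : L ≤ 2 ^ (ℓ+1) := hLℓ.le
          exact Nat.mul_le_mul_right _ (by omega)
      _ = 2 ^ h * 2 ^ (ℓ + 3) := by rw [e2]; ring
      _ = 2 ^ L := e.symm
  have hLpos : 0 < L := by omega
  -- upper size bound : size ≤ 3 n
  have hupper : (bigT h).size ≤ 3 * n := by
    have step : 4 * L * ((bigT h).size + 1) ≤ 11 * L * n := by
      calc 4 * L * ((bigT h).size + 1) ≤ 4 * L * (11 * h * 2 ^ h) := Nat.mul_le_mul_left _ hub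
        _ = 11 * h * (4 * L * 2 ^ h) := by ring
        _ ≤ 11 * h * 2 ^ L := Nat.mul_le_mul_left _ hbr2
        _ ≤ 11 * L * 2 ^ L := Nat.mul_le_mul_right _ (by omega)
        _ ≤ 11 * L * n := Nat.mul_le_mul_left _ hLn
    have step2 : 4 * ((bigT h).size + 1) ≤ 11 * n := by
      have e1 : L * (4 * ((bigT h).size + 1)) = 4 * L * ((bigT h).size + 1) := by ring
      have e2 : L * (11 * n) = 11 * L * n := by ring
      exact Nat.le_of_mul_le_mul_left (by omega) hLpos
    omega
  -- lower size bound : n ≤ 13 * size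
  have hnlb : n ≤ 16 * L * 2 ^ h := by
    calc n ≤ 2 ^ (L+1) := hnL.le
      _ = 2 * 2 ^ L := by ring
      _ ≤ 2 * (8 * L * 2 ^ h) := Nat.mul_le_mul_left _ hbr1
      _ = 16 * L * 2 ^ h := by ring
  have hlower : n ≤ 13 * (bigT h).size := by
    have s1 : 5 * n ≤ 32 * ((bigT h).size + 1) := by
      calc 5 * n ≤ 5 * (16 * L * 2 ^ h) := Nat.mul_le_mul_left _ hnlb
        _ ≤ 5 * (16 * (2 * h) * 2 ^ h) := by
            have : 16 * L * 2 ^ h ≤ 16 * (2 * h) * 2 ^ h :=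
              Nat.mul_le_mul_right _ (Nat.mul_le_mul_left _ hh2)
            omega
        _ = 32 * (5 * h * 2 ^ h) := by ring
        _ ≤ 32 * ((bigT h).size + 1) := Nat.mul_le_mul_left _ hlb
    have hs1 : 1 ≤ (bigT h).size := size_pos _
    omega
  exact ⟨hlower, hupper, hnlb, Nat.mul_le_mul_left _ (by omega), hL, by omega⟩

end Statement11

namespace Statement11
open RTree

theorem logb_two_pow (m : ℕ) : Real.logb 2 ((2:ℝ) ^ m) = m := by
  rw [Real.logb_pow, Real.logb_self_eq_one (by norm_num), mul_one]

theorem depth_le_logb (s : RTree ABC) (hs : 2 ^ s.depth ≤ 4 * s.size ^ 2) :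
    (s.depth : ℝ) ≤ 2 * Real.logb 2 (s.size : ℝ) + 2 := by
  have h1 : ((2:ℝ)) ^ s.depth ≤ 4 * (s.size : ℝ) ^ 2 := by exact_mod_cast hs
  have hsz : (1:ℝ) ≤ (s.size : ℝ) := by exact_mod_cast size_pos s
  have h2 : Real.logb 2 ((2:ℝ) ^ s.depth) ≤ Real.logb 2 (4 * (s.size:ℝ)^2) :=
    Real.logb_le_logb_of_le one_lt_two (by positivity) h1
  rw [logb_two_pow] at h2
  have h3 : Real.logb 2 (4 * (s.size:ℝ)^2) = 2 + 2 * Real.logb 2 (s.size:ℝ) := by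
    rw [Real.logb_mul (by norm_num) (by positivity), Real.logb_pow]
    have h4 : (4:ℝ) = 2 ^ (2:ℕ) := by norm_num
    rw [h4, logb_two_pow]
    ring
  linarith [h2, h3.le]

end Statement11


/-- A family of trees of linear size, all of whose subtrees
`s` have depth `O(log |s|)`, whose minimal dags have size
`Ω(n·log log n / log n)` (i.e. with that many pairwise distinct subtrees). -/
theorem exists_locally_shallow_trees_with_large_dag :
    ∃ (c₁ c₂ C c : ℝ), 0 < c₁ ∧ 0 < c₂ ∧ 0 < C ∧ 0 < c ∧
      ∃ t : ℕ → RTree ABC, (∀ n, (t n).WF ABC.rk) ∧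
        ∃ n₀ : ℕ, ∀ n : ℕ, n₀ ≤ n →
          (c₁ * (n : ℝ) ≤ ((t n).size : ℝ) ∧ ((t n).size : ℝ) ≤ c₂ * (n : ℝ)) ∧
          (∀ s : RTree ABC, s.Subtree (t n) →
            (s.depth : ℝ) ≤ C * Real.logb 2 (s.size : ℝ) + C) ∧
          c * (n : ℝ) * Real.logb 2 (Real.logb 2 (n : ℝ)) / Real.logb 2 (n : ℝ) ≤
            ({s : RTree ABC | s.Subtree (t n)}.ncard : ℝ) := by
  classical
  open Statement11 in
  refine ⟨1/13, 3, 2, 1/32, by norm_num, by norm_num, by norm_num, by norm_num,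
    fun n => bigT (hfun n), fun n => wf_bigT _, 2 ^ 100, ?_⟩
  intro n hn
  obtain ⟨h1, h2, h3, h4, h5, h6⟩ := main_aux n hn
  set L := Nat.log 2 n with hLdef
  set ℓ := Nat.log 2 L with hℓdef
  set h := hfun n with hhdef
  set k := kk h with hkdef
  have hn0 : 0 < n := by positivity
  refine ⟨⟨?_, ?_⟩, ?_, ?_⟩
  · -- lower size bound
    have : (n : ℝ) ≤ 13 * ((bigT h).size : ℝ) := by exact_mod_cast h1
    linarith
  · -- upper size bound
    have : ((bigT h).size : ℝ) ≤ 3 * n := by exact_mod_cast h2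
    linarith
  · -- depth bound
    intro s hs
    exact depth_le_logb s (good_bigT h s hs)
  · -- dag lower bound
    have hLn : 2 ^ L ≤ n := Nat.pow_log_le_self 2 (by omega)
    have hnL : n < 2 ^ (L + 1) := Nat.lt_pow_succ_log_self (by norm_num) n
    set X := Real.logb 2 (Real.logb 2 (n : ℝ)) with hXdef
    set Y := Real.logb 2 (n : ℝ) with hYdef
    have hLpos : (0:ℝ) < L := by exact_mod_cast (by omega : 0 < L)
    have hY : (L : ℝ) ≤ Y := by
      have hc : ((2:ℝ)) ^ L ≤ (n:ℝ) := by exact_mod_cast hLn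
      have := Real.logb_le_logb_of_le one_lt_two (by positivity) hc
      rwa [logb_two_pow] at this
    have hYub : Y ≤ (L : ℝ) + 1 := by
      have hc : (n:ℝ) ≤ (2:ℝ) ^ (L+1) := by exact_mod_cast hnL.le
      have := Real.logb_le_logb_of_le one_lt_two (by exact_mod_cast hn0) hc
      rwa [logb_two_pow, Nat.cast_add, Nat.cast_one] at this
    have hYpos : (0:ℝ) < Y := lt_of_lt_of_le hLpos hY
    have hX : X ≤ (ℓ : ℝ) + 1 := by
      have s1 : X ≤ Real.logb 2 ((L:ℝ) + 1) :=
        Real.logb_le_logb_of_le one_lt_two hYpos hYub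
      have s2 : Real.logb 2 ((L:ℝ) + 1) ≤ Real.logb 2 ((2:ℝ) ^ (ℓ+1)) := by
        apply Real.logb_le_logb_of_le one_lt_two (by positivity)
        exact_mod_cast h6
      rw [logb_two_pow, Nat.cast_add, Nat.cast_one] at s2
      linarith
    have hX0 : 0 ≤ X := by
      apply Real.logb_nonneg one_lt_two
      have : (100:ℝ) ≤ (L:ℝ) := by exact_mod_cast h5
      linarith
    have hdiv : X / Y ≤ ((ℓ:ℝ) + 1) / (L:ℝ) := div_le_div₀ (by positivity) hX hLpos hY
    have key1 : 1/32 * (n:ℝ) * X / Y ≤ 1/32 * (n:ℝ) * (((ℓ:ℝ)+1)/(L:ℝ)) := by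
      rw [mul_div_assoc]
      exact mul_le_mul_of_nonneg_left hdiv (by positivity)
    have hn16 : (n:ℝ) ≤ 16 * (L:ℝ) * 2 ^ h := by exact_mod_cast h3
    have key2 : 1/32 * (n:ℝ) * (((ℓ:ℝ)+1)/(L:ℝ)) ≤ (2:ℝ) ^ h * ((ℓ:ℝ)+1) := by
      have e : 1/32 * (n:ℝ) * (((ℓ:ℝ)+1)/(L:ℝ)) = ((n:ℝ) * ((ℓ:ℝ)+1)) / (32 * (L:ℝ)) := by
        ring
      rw [e, div_le_iff₀ (by positivity)]
      have hℓ0 : (0:ℝ) ≤ (ℓ:ℝ) + 1 := by positivity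
      have m1 : (n:ℝ) * ((ℓ:ℝ)+1) ≤ (16 * (L:ℝ) * 2 ^ h) * ((ℓ:ℝ)+1) :=
        mul_le_mul_of_nonneg_right hn16 hℓ0
      have m0 : (0:ℝ) ≤ (16 * (L:ℝ) * 2 ^ h) * ((ℓ:ℝ)+1) := by positivity
      have e2 : (2:ℝ) ^ h * ((ℓ:ℝ)+1) * (32 * (L:ℝ)) = 2 * ((16 * (L:ℝ) * 2 ^ h) * ((ℓ:ℝ)+1)) := by
        ring
      linarith
    have key3 : (2:ℝ) ^ h * ((ℓ:ℝ)+1) ≤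
        (({s : RTree ABC | s.Subtree (bigT h)}.ncard : ℝ)) := by
      have c1 : 2 ^ h * (ℓ + 1) ≤ {s : RTree ABC | s.Subtree (bigT h)}.ncard :=
        le_trans h4 (card_lower h)
      exact_mod_cast c1
    calc 1/32 * (n:ℝ) * X / Y ≤ 1/32 * (n:ℝ) * (((ℓ:ℝ)+1)/(L:ℝ)) := key1
      _ ≤ (2:ℝ) ^ h * ((ℓ:ℝ)+1) := key2
      _ ≤ _ := key3
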